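/- Let r ≥ 1 be an integer, let ω : Fin r → ℝ with ω(i) > 0 for all i, and let x, w ∈ ℂ with Re(x) > 0 and Re(w) > 0. Then (1/Γ(w)) · ∫_{0}^{∞} ( Π_{i} (1 − e^{−t·ω(i)}) ) · e^{−x t} · t^{w−1} dt = Σ_{S ⊆ Fin r} (−1)^{|S|} · (x + Σ_{i∈S} ω(i))^{−w}, the sum running over all subsets S of Fin r (including the empty set). -/

import Mathlib

open MeasureTheory Complex Set Filter

lemma real_gamma_integrable {s c : ℝ} (hs : 0 < s) (hc : 0 < c) :
    IntegrableOn (fun t : ℝ ↦ Real.exp (-(c * t)) * t ^ (s - 1)) (Set.Ioi 0) := by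
  have h := Real.GammaIntegral_convergent hs
  rw [← mul_zero c, ← integrableOn_Ioi_comp_mul_left_iff _ _ hc] at h
  have h2 : IntegrableOn (fun t : ℝ ↦ ((c:ℝ) ^ (s-1))⁻¹ *
      (Real.exp (-(c * t)) * (c * t) ^ (s - 1))) (Set.Ioi 0) := h.const_mul _
  refine IntegrableOn.congr_fun h2 (fun t ht ↦ ?_) measurableSet_Ioi
  rw [mem_Ioi] at ht
  rw [Real.mul_rpow hc.le ht.le]
  have : (c:ℝ) ^ (s-1) ≠ 0 := (Real.rpow_pos_of_pos hc _).ne'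
  field_simp

lemma cexp_cpow_aesm (z w : ℂ) :
    AEStronglyMeasurable (fun t : ℝ ↦ Complex.exp (-z * t) * (t:ℂ) ^ (w - 1))
      (volume.restrict (Set.Ioi 0)) := by
  refine (ContinuousOn.mul ?_ ?_).aestronglyMeasurable measurableSet_Ioi
  · exact (Continuous.comp Complex.continuous_exp (by continuity)).continuousOn
  · intro t ht
    refine (ContinuousAt.continuousWithinAt ?_)
    exact (continuousAt_cpow_const (Or.inl (by simpa using ht))).comp
      Complex.continuous_ofReal.continuousAt

lemma cexp_cpow_norm {z w : ℂ} {t : ℝ} (ht : 0 < t) :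
    ‖Complex.exp (-z * t) * (t:ℂ) ^ (w - 1)‖ = Real.exp (-(z.re * t)) * t ^ (w.re - 1) := by
  rw [norm_mul, Complex.norm_exp,
    Complex.norm_cpow_eq_rpow_re_of_pos ht]
  simp [Complex.sub_re]

lemma complex_gamma_integrable {w z : ℂ} (hw : 0 < w.re) (hz : 0 < z.re) :
    IntegrableOn (fun t : ℝ ↦ Complex.exp (-z * t) * (t:ℂ) ^ (w - 1)) (Set.Ioi 0) := by
  refine Integrable.mono' (real_gamma_integrable hw hz) (cexp_cpow_aesm z w) ?_
  filter_upwards [ae_restrict_mem measurableSet_Ioi] with t ht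
  rw [cexp_cpow_norm ht]

lemma complex_gamma_real_case {w : ℂ} (hw : 0 < w.re) {c : ℝ} (hc : 0 < c) :
    ∫ t in Set.Ioi (0:ℝ), Complex.exp (-(c:ℂ) * t) * (t:ℂ) ^ (w - 1)
      = Complex.Gamma w * (c:ℂ) ^ (-w) := by
  have h := Complex.integral_cpow_mul_exp_neg_mul_Ioi hw hc
  have h2 : ∫ t in Set.Ioi (0:ℝ), Complex.exp (-(c:ℂ) * t) * (t:ℂ) ^ (w - 1)
      = ∫ t in Set.Ioi (0:ℝ), (t:ℂ) ^ (w - 1) * Complex.exp (-((c:ℂ) * t)) := by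
    refine setIntegral_congr_fun measurableSet_Ioi (fun t ht ↦ ?_)
    ring_nf
  rw [h2, h, one_div, Complex.inv_cpow _ _ (by
      rw [Complex.arg_ofReal_of_nonneg hc.le]; exact Real.pi_ne_zero.symm),
    ← Complex.cpow_neg, mul_comm]

lemma complex_gamma_hasDerivAt {w : ℂ} (hw : 0 < w.re) {z₀ : ℂ} (hz₀ : 0 < z₀.re) :
    HasDerivAt (fun z : ℂ ↦ ∫ t in Set.Ioi (0:ℝ), Complex.exp (-z * t) * (t:ℂ) ^ (w - 1))
      (∫ t in Set.Ioi (0:ℝ), Complex.exp (-z₀ * t) * (-(t:ℂ)) * (t:ℂ) ^ (w - 1)) z₀ := by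
  set ε : ℝ := z₀.re / 2 with hε
  have hεpos : 0 < ε := by positivity
  have key := hasDerivAt_integral_of_dominated_loc_of_deriv_le (μ := volume.restrict (Set.Ioi 0))
    (F := fun z (t : ℝ) ↦ Complex.exp (-z * t) * (t:ℂ) ^ (w - 1))
    (F' := fun z (t : ℝ) ↦ Complex.exp (-z * t) * (-(t:ℂ)) * (t:ℂ) ^ (w - 1))
    (bound := fun t : ℝ ↦ Real.exp (-(ε * t)) * t ^ ((w.re + 1) - 1))
    (x₀ := z₀) (Metric.ball_mem_nhds z₀ hεpos)
    (Filter.Eventually.of_forall fun z ↦ cexp_cpow_aesm z w)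
    (complex_gamma_integrable hw hz₀) ?_ ?_ ?_ ?_
  · exact key.2
  · -- measurability of F' z₀
    have := (cexp_cpow_aesm z₀ w).mul
      ((Complex.continuous_ofReal.neg.aestronglyMeasurable).restrict (s := Set.Ioi 0))
    refine this.congr ?_
    filter_upwards with t
    simp only [Pi.mul_apply, Pi.neg_apply]
    ring
  · -- bound
    filter_upwards [ae_restrict_mem measurableSet_Ioi] with t ht z hz
    rw [Set.mem_Ioi] at ht
    have hzre : ε ≤ z.re := by
      have h1 : |z.re - z₀.re| ≤ ‖z - z₀‖ := by
        simpa using Complex.abs_re_le_norm (z - z₀)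
      have h2 : ‖z - z₀‖ < ε := by
        simpa [Metric.mem_ball, dist_eq] using hz
      have := abs_le.mp (le_of_lt (lt_of_le_of_lt h1 h2))
      simp only [hε] at *
      linarith [this.1]
    calc ‖Complex.exp (-z * t) * (-(t:ℂ)) * (t:ℂ) ^ (w - 1)‖
        = Real.exp (-(z.re * t)) * t * t ^ (w.re - 1) := by
          rw [show Complex.exp (-z * t) * (-(t:ℂ)) * (t:ℂ) ^ (w - 1)
              = (Complex.exp (-z * t) * (t:ℂ) ^ (w - 1)) * (-(t:ℂ)) by ring,
            norm_mul, cexp_cpow_norm ht]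
          simp [abs_of_pos ht]
          ring
      _ ≤ Real.exp (-(ε * t)) * t * t ^ (w.re - 1) := by
          have : Real.exp (-(z.re * t)) ≤ Real.exp (-(ε * t)) := by
            apply Real.exp_le_exp.mpr; nlinarith
          have h3 : (0:ℝ) ≤ t ^ (w.re - 1) := Real.rpow_nonneg ht.le _
          exact mul_le_mul_of_nonneg_right (mul_le_mul_of_nonneg_right this ht.le) h3
      _ = Real.exp (-(ε * t)) * t ^ ((w.re + 1) - 1) := by
          rw [mul_assoc]
          congr 1
          rw [show (w.re + 1) - 1 = 1 + (w.re - 1) by ring, Real.rpow_add ht,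
            Real.rpow_one]
  · -- integrability of bound
    exact real_gamma_integrable (by linarith) hεpos
  · -- differentiability
    filter_upwards [ae_restrict_mem measurableSet_Ioi] with t ht z hz
    have h1 : HasDerivAt (fun z : ℂ ↦ -z * (t:ℂ)) (-(t:ℂ)) z := by
      simpa using ((hasDerivAt_id z).neg.mul_const (t:ℂ))
    exact (h1.cexp.mul_const ((t:ℂ) ^ (w - 1))).congr_deriv (by ring)

lemma complex_gamma_integral {w : ℂ} (hw : 0 < w.re) {z : ℂ} (hz : 0 < z.re) :
    ∫ t in Set.Ioi (0:ℝ), Complex.exp (-z * t) * (t:ℂ) ^ (w - 1)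
      = Complex.Gamma w * z ^ (-w) := by
  set U : Set ℂ := {z | 0 < z.re} with hU
  have hUopen : IsOpen U := isOpen_lt continuous_const Complex.continuous_re
  have hF : AnalyticOnNhd ℂ
      (fun z : ℂ ↦ ∫ t in Set.Ioi (0:ℝ), Complex.exp (-z * t) * (t:ℂ) ^ (w - 1)) U := by
    refine DifferentiableOn.analyticOnNhd (fun z hz ↦ ?_) hUopen
    exact (complex_gamma_hasDerivAt hw hz).differentiableAt.differentiableWithinAt
  have hG : AnalyticOnNhd ℂ (fun z : ℂ ↦ Complex.Gamma w * z ^ (-w)) U := by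
    refine DifferentiableOn.analyticOnNhd (fun z hz ↦ ?_) hUopen
    exact (((differentiableAt_id.cpow (differentiableAt_const _)
      (Or.inl hz)).const_mul _)).differentiableWithinAt
  have hconn : IsPreconnected U := (convex_halfSpace_re_gt 0).isPreconnected
  have h1U : (1:ℂ) ∈ U := by simp [hU]
  have hfreq : ∃ᶠ z in nhdsWithin 1 {(1:ℂ)}ᶜ,
      (∫ t in Set.Ioi (0:ℝ), Complex.exp (-z * t) * (t:ℂ) ^ (w - 1))
        = Complex.Gamma w * z ^ (-w) := by
    have htend : Filter.Tendsto (fun n : ℕ ↦ (1 + ((n:ℝ)+1)⁻¹ : ℂ)) Filter.atTop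
        (nhdsWithin 1 {(1:ℂ)}ᶜ) := by
      refine tendsto_nhdsWithin_of_tendsto_nhds_of_eventually_within _ ?_ ?_
      · have : Filter.Tendsto (fun n : ℕ ↦ ((n:ℝ)+1)⁻¹) Filter.atTop (nhds 0) :=
          tendsto_one_div_add_atTop_nhds_zero_nat.congr (by simp [one_div])
        have := (Complex.continuous_ofReal.tendsto 0).comp this
        simpa using tendsto_const_nhds.add this
      · filter_upwards with n
        simp only [Set.mem_compl_iff, Set.mem_singleton_iff]
        intro h
        have h0 : (((n:ℝ)+1)⁻¹ : ℂ) = 0 := by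
          have := sub_eq_zero.mpr h
          simpa using this
        rw [inv_eq_zero] at h0
        exact Nat.cast_add_one_ne_zero n h0
    refine htend.frequently (Filter.Eventually.of_forall fun n ↦ ?_).frequently
    have hc : (0:ℝ) < 1 + ((n:ℝ)+1)⁻¹ := by positivity
    have := complex_gamma_real_case hw hc
    have hcast : ((1 + ((n:ℝ)+1)⁻¹ : ℝ) : ℂ) = (1 + ((n:ℝ)+1)⁻¹ : ℂ) := by push_cast; ring
    rw [hcast] at this
    exact this
  exact hF.eqOn_of_preconnected_of_frequently_eq hG hconn h1U hfreq hz


theorem multiperiod_hurwitz_zeta_integral_representation (r : ℕ) (hr : 1 ≤ r)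
    (ω : Fin r → ℝ) (hω : ∀ i, 0 < ω i) (x w : ℂ) (hx : 0 < x.re) (hw : 0 < w.re) :
    (1 / Complex.Gamma w) *
      ∫ t in Set.Ioi (0 : ℝ),
        (∏ i, (1 - Complex.exp (-(t : ℂ) * (ω i : ℂ)))) *
          Complex.exp (-x * (t : ℂ)) * (t : ℂ) ^ (w - 1) =
    ∑ S : Finset (Fin r),
      (-1 : ℂ) ^ S.card * (x + ∑ i ∈ S, (ω i : ℂ)) ^ (-w) := by
  have hΓ : Complex.Gamma w ≠ 0 := Complex.Gamma_ne_zero_of_re_pos hw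
  have hzre : ∀ S : Finset (Fin r), 0 < (x + ∑ i ∈ S, (ω i : ℂ)).re := by
    intro S
    have h0 : 0 ≤ ∑ i ∈ S, ω i := Finset.sum_nonneg fun i _ ↦ (hω i).le
    have heq : (x + ∑ i ∈ S, (ω i : ℂ)).re = x.re + ∑ i ∈ S, ω i := by
      rw [Complex.add_re, Complex.re_sum]
      simp
    rw [heq]
    linarith
  have key : Set.EqOn
      (fun t : ℝ ↦ (∏ i, (1 - Complex.exp (-(t : ℂ) * (ω i : ℂ)))) *
          Complex.exp (-x * (t : ℂ)) * (t : ℂ) ^ (w - 1))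
      (fun t : ℝ ↦ ∑ S : Finset (Fin r), (-1 : ℂ) ^ S.card *
          (Complex.exp (-(x + ∑ i ∈ S, (ω i : ℂ)) * t) * (t : ℂ) ^ (w - 1)))
      (Set.Ioi 0) := by
    intro t ht
    have hprod : (∏ i, (1 - Complex.exp (-(t : ℂ) * (ω i : ℂ))))
        = ∑ S : Finset (Fin r), (-1 : ℂ) ^ S.card *
            Complex.exp (-(∑ i ∈ S, (ω i : ℂ)) * t) := by
      have h := Fintype.prod_add (fun i ↦ -Complex.exp (-(t : ℂ) * (ω i : ℂ)))
        (fun _ : Fin r ↦ (1 : ℂ))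
      simp only [Finset.prod_const_one, mul_one] at h
      rw [show (∏ i, (1 - Complex.exp (-(t : ℂ) * (ω i : ℂ))))
          = ∏ i, (-Complex.exp (-(t : ℂ) * (ω i : ℂ)) + 1) from
          Finset.prod_congr rfl fun i _ ↦ by ring, h]
      refine Finset.sum_congr rfl fun S _ ↦ ?_
      have h1 : ∀ i ∈ S, -Complex.exp (-(t : ℂ) * (ω i : ℂ))
          = (-1) * Complex.exp (-(t : ℂ) * (ω i : ℂ)) := fun i _ ↦ by ring
      rw [Finset.prod_congr rfl h1, Finset.prod_mul_distrib, Finset.prod_const,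
        ← Complex.exp_sum]
      congr 2
      calc ∑ i ∈ S, -(t : ℂ) * (ω i : ℂ)
          = ∑ i ∈ S, -((ω i : ℂ) * t) := Finset.sum_congr rfl fun i _ ↦ by ring
        _ = -∑ i ∈ S, (ω i : ℂ) * t := by rw [Finset.sum_neg_distrib]
        _ = -(∑ i ∈ S, (ω i : ℂ)) * t := by rw [neg_mul, Finset.sum_mul]
    dsimp only
    rw [hprod, Finset.sum_mul, Finset.sum_mul]
    refine Finset.sum_congr rfl fun S _ ↦ ?_
    have hee : Complex.exp (-(∑ i ∈ S, (ω i : ℂ)) * t) * Complex.exp (-x * t)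
        = Complex.exp (-(x + ∑ i ∈ S, (ω i : ℂ)) * t) := by
      rw [← Complex.exp_add]
      congr 1
      ring
    rw [← hee]
    ring
  rw [MeasureTheory.setIntegral_congr_fun measurableSet_Ioi key,
    MeasureTheory.integral_finset_sum _
      (fun S _ ↦ ((complex_gamma_integrable hw (hzre S)).const_mul _))]
  have heval : ∀ S : Finset (Fin r),
      ∫ t in Set.Ioi (0:ℝ), (-1:ℂ) ^ S.card *
          (Complex.exp (-(x + ∑ i ∈ S, (ω i : ℂ)) * t) * (t : ℂ) ^ (w - 1))
        = (-1:ℂ) ^ S.card *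
            (Complex.Gamma w * (x + ∑ i ∈ S, (ω i : ℂ)) ^ (-w)) := fun S ↦ by
    rw [MeasureTheory.integral_const_mul, complex_gamma_integral hw (hzre S)]
  rw [Finset.sum_congr rfl fun S _ ↦ heval S, Finset.mul_sum]
  refine Finset.sum_congr rfl fun S _ ↦ ?_
  field_simp
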